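/- Let A be a probability distribution on ℝ supported on [−R, R], and let 0 < σ ≤ 1/2. Then the chi-squared divergence of the convolution A ⋆ N(0, σ²) from the standard Gaussian N(0,1) satisfies χ²(A ⋆ N(0,σ²), N(0,1)) ≤ e^{C·R²}/σ for some absolute constant C > 0. -/

import Mathlib

open Real MeasureTheory ENNReal

/-- Density of the centered Gaussian with standard deviation `s`. -/
noncomputable def gaussPDF (s x : ℝ) : ℝ :=
  (s * Real.sqrt (2 * Real.pi))⁻¹ * Real.exp (-x ^ 2 / (2 * s ^ 2))

lemma gaussPDF_nonneg {s : ℝ} (hs : 0 ≤ s) (x : ℝ) : 0 ≤ gaussPDF s x := by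
  unfold gaussPDF; positivity

lemma gaussPDF_pos {s : ℝ} (hs : 0 < s) (x : ℝ) : 0 < gaussPDF s x := by
  unfold gaussPDF
  have : 0 < s * Real.sqrt (2 * Real.pi) := by positivity
  positivity

lemma gaussPDF_cont (s : ℝ) : Continuous (gaussPDF s) := by
  unfold gaussPDF; fun_prop

lemma gaussPDF_le {s : ℝ} (hs : 0 < s) (x : ℝ) :
    gaussPDF s x ≤ (s * Real.sqrt (2 * Real.pi))⁻¹ := by
  unfold gaussPDF
  have h1 : Real.exp (-x ^ 2 / (2 * s ^ 2)) ≤ 1 := by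
    rw [Real.exp_le_one_iff]
    have : (0:ℝ) < 2 * s ^ 2 := by positivity
    apply div_nonpos_of_nonpos_of_nonneg <;> nlinarith [sq_nonneg x]
  have h2 : (0:ℝ) ≤ (s * Real.sqrt (2 * Real.pi))⁻¹ := by positivity
  nlinarith

lemma lintegral_sq_le {A : Measure ℝ} [IsProbabilityMeasure A] {f : ℝ → ℝ≥0∞}
    (hf : AEMeasurable f A) : (∫⁻ s, f s ∂A) ^ 2 ≤ ∫⁻ s, f s ^ 2 ∂A := by
  have hpq : Real.HolderConjugate 2 2 := Real.HolderConjugate.two_two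
  have h := ENNReal.lintegral_mul_le_Lp_mul_Lq A hpq hf aemeasurable_const (g := fun _ => 1)
  simp only [mul_one, Pi.mul_apply, ENNReal.one_rpow, lintegral_const, one_mul,
    measure_univ, ENNReal.one_rpow, ENNReal.rpow_natCast] at h
  have h2 : (∫⁻ s, f s ∂A) ^ 2 ≤ ((∫⁻ s, f s ^ (2:ℝ) ∂A) ^ (1/(2:ℝ))) ^ 2 := by
    have := pow_le_pow_left' h 2
    simpa using this
  refine h2.trans_eq ?_
  rw [← ENNReal.rpow_natCast ((∫⁻ s, f s ^ (2:ℝ) ∂A) ^ (1/(2:ℝ))) 2, ← ENNReal.rpow_mul]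
  norm_num

lemma gauss_integrable (a b c : ℝ) (ha : 0 < a) :
    Integrable (fun x => Real.exp (-(a * x ^ 2 + b * x + c))) := by
  have h : (fun x => Real.exp (-(a * x ^ 2 + b * x + c)))
      = fun x => Real.exp (b ^ 2 / (4 * a) - c) * Real.exp (-a * (x + b / (2 * a)) ^ 2) := by
    funext x
    rw [← Real.exp_add]
    congr 1
    field_simp
    ring
  rw [h]
  exact ((integrable_exp_neg_mul_sq ha).comp_add_right (b / (2 * a))).const_mul _

lemma gauss_integral (a b c : ℝ) (ha : 0 < a) :
    ∫ x, Real.exp (-(a * x ^ 2 + b * x + c))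
      = Real.sqrt (π / a) * Real.exp (b ^ 2 / (4 * a) - c) := by
  have h : (fun x => Real.exp (-(a * x ^ 2 + b * x + c)))
      = fun x => Real.exp (b ^ 2 / (4 * a) - c) * Real.exp (-a * (x + b / (2 * a)) ^ 2) := by
    funext x
    rw [← Real.exp_add]
    congr 1
    field_simp
    ring
  rw [h, MeasureTheory.integral_const_mul,
    integral_add_right_eq_self (fun x => Real.exp (-a * x ^ 2)) (b / (2 * a)),
    integral_gaussian]
  ring

lemma key_eq (σ s : ℝ) (hσ : 0 < σ) :
    (fun x => gaussPDF σ (x - s) ^ 2 / gaussPDF 1 x)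
      = fun x => (σ ^ 2 * Real.sqrt (2 * Real.pi))⁻¹ *
          Real.exp (-((1/σ^2 - 1/2) * x ^ 2 + (-2*s/σ^2) * x + s^2/σ^2)) := by
  funext x
  unfold gaussPDF
  have ht0 : (0:ℝ) < Real.sqrt (2 * Real.pi) := by positivity
  rw [mul_pow, div_eq_mul_inv, mul_inv, mul_inv, ← Real.exp_neg, ← Real.exp_nat_mul]
  rw [mul_mul_mul_comm, ← Real.exp_add]
  have hexp : ((2:ℕ) * (-(x - s) ^ 2 / (2 * σ ^ 2))) + (-(-x ^ 2 / (2 * 1 ^ 2)))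
      = -((1/σ^2 - 1/2) * x ^ 2 + (-2*s/σ^2) * x + s^2/σ^2) := by
    push_cast
    field_simp
    ring
  rw [hexp]
  congr 1
  have htne : Real.sqrt (2*Real.pi) ≠ 0 := ht0.ne'
  field_simp

lemma ha_pos {σ : ℝ} (hσ : 0 < σ) (hσ2 : σ ≤ 1/2) : (0:ℝ) < 1/σ^2 - 1/2 := by
  have h2 : (0:ℝ) < σ^2 := by positivity
  have : (4:ℝ) ≤ 1/σ^2 := by
    rw [le_div_iff₀ h2]; nlinarith
  linarith

lemma exp_aux (σ s : ℝ) (hσ : 0 < σ) (hσ2 : σ ≤ 1/2) :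
    (-2*s/σ^2) ^ 2 / (4 * (1/σ^2 - 1/2)) - s^2/σ^2 = s^2/(2-σ^2) := by
  have hτ : σ^2 ≠ 0 := by positivity
  have h2τ : 2 - σ^2 ≠ 0 := by nlinarith
  have ha : 4 * (1/σ^2 - 1/2) = (2*(2-σ^2))/σ^2 := by field_simp; ring
  rw [ha]
  field_simp
  ring

lemma const_aux (σ : ℝ) (hσ : 0 < σ) (hσ2 : σ ≤ 1/2) :
    (σ ^ 2 * Real.sqrt (2 * π))⁻¹ * Real.sqrt (π / (1/σ^2 - 1/2)) ≤ 1 / σ := by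
  have h2τ : (1:ℝ) ≤ 2 - σ^2 := by nlinarith
  have h1 : π / (1/σ^2 - 1/2) = 2*π * (σ^2/(2-σ^2)) := by
    have hτ : σ^2 ≠ 0 := by positivity
    have : 2 - σ^2 ≠ 0 := by nlinarith
    field_simp
  rw [h1, Real.sqrt_mul (by positivity : (0:ℝ) ≤ 2*π) (σ^2/(2-σ^2))]
  have h2 : Real.sqrt (σ^2/(2-σ^2)) ≤ σ := by
    calc Real.sqrt (σ^2/(2-σ^2)) ≤ Real.sqrt (σ^2) :=
          Real.sqrt_le_sqrt (div_le_self (sq_nonneg σ) h2τ)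
      _ = σ := Real.sqrt_sq hσ.le
  have h3 : (σ ^ 2 * Real.sqrt (2 * π))⁻¹ * (Real.sqrt (2*π) * σ) = 1/σ := by
    have ht : Real.sqrt (2*π) ≠ 0 := by positivity
    field_simp
  calc (σ ^ 2 * Real.sqrt (2 * π))⁻¹ * (Real.sqrt (2*π) * Real.sqrt (σ^2/(2-σ^2)))
      ≤ (σ ^ 2 * Real.sqrt (2 * π))⁻¹ * (Real.sqrt (2*π) * σ) := by gcongr
    _ = 1/σ := h3

lemma key_integrable (σ s : ℝ) (hσ : 0 < σ) (hσ2 : σ ≤ 1/2) :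
    Integrable (fun x => gaussPDF σ (x - s) ^ 2 / gaussPDF 1 x) := by
  rw [key_eq σ s hσ]
  exact (gauss_integrable _ _ _ (ha_pos hσ hσ2)).const_mul _

lemma key_bound (σ s R : ℝ) (hσ : 0 < σ) (hσ2 : σ ≤ 1/2) (hs : s^2 ≤ R^2) :
    ∫ x, gaussPDF σ (x - s) ^ 2 / gaussPDF 1 x ≤ Real.exp (R^2) / σ := by
  rw [key_eq σ s hσ]
  rw [MeasureTheory.integral_const_mul, gauss_integral _ _ _ (ha_pos hσ hσ2)]
  have he : (-2*s/σ^2) ^ 2 / (4 * (1/σ^2 - 1/2)) - s^2/σ^2 ≤ R^2 := by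
    rw [exp_aux σ s hσ hσ2]
    have h2 : s^2 / (2 - σ^2) ≤ s^2 := by
      apply div_le_self (sq_nonneg s)
      nlinarith
    linarith
  calc (σ ^ 2 * Real.sqrt (2 * π))⁻¹
        * (Real.sqrt (π / (1/σ^2 - 1/2))
          * Real.exp ((-2*s/σ^2) ^ 2 / (4 * (1/σ^2 - 1/2)) - s^2/σ^2))
      = ((σ ^ 2 * Real.sqrt (2 * π))⁻¹ * Real.sqrt (π / (1/σ^2 - 1/2)))
          * Real.exp ((-2*s/σ^2) ^ 2 / (4 * (1/σ^2 - 1/2)) - s^2/σ^2) := by ring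
    _ ≤ (1/σ) * Real.exp (R^2) := by
        apply mul_le_mul (const_aux σ hσ hσ2) (Real.exp_le_exp.2 he) (Real.exp_pos _).le
        positivity
    _ = Real.exp (R^2) / σ := by ring

/-- The chi-squared divergence of `A ⋆ N(0,σ²)` (whose density at `x` is
`∫ γ_{σ²}(x - s) dA(s)`) from `N(0,1)` is at most `e^{C R²}/σ` when `A` is
supported on `[-R, R]` and `0 < σ ≤ 1/2`. -/
theorem chiSq_convolution_bound :
    ∃ C > (0 : ℝ), ∀ (R σ : ℝ) (A : Measure ℝ), IsProbabilityMeasure A →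
      A (Set.Icc (-R) R)ᶜ = 0 → 0 < σ → σ ≤ 1 / 2 →
      (∫ x, (∫ s, gaussPDF σ (x - s) ∂A) ^ 2 / gaussPDF 1 x) - 1
        ≤ Real.exp (C * R ^ 2) / σ := by
  refine ⟨1, one_pos, ?_⟩
  intro R σ A hA hsupp hσ hσ2
  rw [one_mul]
  have hBpos : (0:ℝ) ≤ Real.exp (R ^ 2) / σ := by positivity
  set p : ℝ → ℝ := fun x => ∫ s, gaussPDF σ (x - s) ∂A with hp
  suffices h : (∫ x, p x ^ 2 / gaussPDF 1 x) ≤ Real.exp (R ^ 2) / σ by linarith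
  -- measurability facts
  have hcont : Continuous fun q : ℝ × ℝ => gaussPDF σ (q.1 - q.2) :=
    (gaussPDF_cont σ).comp (continuous_fst.sub continuous_snd)
  have hpm : StronglyMeasurable p := hcont.stronglyMeasurable.integral_prod_right'
  have hgm : AEStronglyMeasurable (fun x => p x ^ 2 / gaussPDF 1 x) (volume : Measure ℝ) :=
    ((hpm.measurable.pow_const 2).div (gaussPDF_cont 1).measurable).aestronglyMeasurable
  have hg_nonneg : ∀ x, 0 ≤ p x ^ 2 / gaussPDF 1 x :=
    fun x => div_nonneg (sq_nonneg _) (gaussPDF_pos one_pos x).le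
  -- the main lintegral bound
  have hae : ∀ᵐ s ∂A, s ∈ Set.Icc (-R) R := by
    rw [ae_iff]
    convert hsupp using 2
    rfl
  have Lbound : (∫⁻ x, ENNReal.ofReal (p x ^ 2 / gaussPDF 1 x))
      ≤ ENNReal.ofReal (Real.exp (R ^ 2) / σ) := by
    have step1 : ∀ x, ENNReal.ofReal (p x ^ 2 / gaussPDF 1 x)
        ≤ ∫⁻ s, ENNReal.ofReal (gaussPDF σ (x - s) ^ 2 / gaussPDF 1 x) ∂A := by
      intro x
      have hd : 0 < gaussPDF 1 x := gaussPDF_pos one_pos x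
      have hmeasA : AEMeasurable (fun s => ENNReal.ofReal (gaussPDF σ (x - s))) A :=
        (((gaussPDF_cont σ).comp (continuous_const.sub continuous_id)).measurable.ennreal_ofReal).aemeasurable
      have hint : Integrable (fun s => gaussPDF σ (x - s)) A := by
        apply (integrable_const ((σ * Real.sqrt (2 * π))⁻¹)).mono'
        · exact ((gaussPDF_cont σ).comp (continuous_const.sub continuous_id)).aestronglyMeasurable
        · filter_upwards with s
          rw [Real.norm_eq_abs, abs_of_nonneg (gaussPDF_nonneg hσ.le _)]
          exact gaussPDF_le hσ _
      have hOf : ENNReal.ofReal (p x) = ∫⁻ s, ENNReal.ofReal (gaussPDF σ (x - s)) ∂A :=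
        ofReal_integral_eq_lintegral_ofReal hint
          (Filter.Eventually.of_forall fun s => gaussPDF_nonneg hσ.le _)
      have hpnn : 0 ≤ p x := integral_nonneg fun s => gaussPDF_nonneg hσ.le _
      have hsq : ENNReal.ofReal (p x ^ 2)
          = (∫⁻ s, ENNReal.ofReal (gaussPDF σ (x - s)) ∂A) ^ 2 := by
        rw [ENNReal.ofReal_pow hpnn, hOf]
      calc ENNReal.ofReal (p x ^ 2 / gaussPDF 1 x)
          = ENNReal.ofReal (p x ^ 2) / ENNReal.ofReal (gaussPDF 1 x) :=
            ENNReal.ofReal_div_of_pos hd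
        _ ≤ (∫⁻ s, ENNReal.ofReal (gaussPDF σ (x - s)) ^ 2 ∂A)
              / ENNReal.ofReal (gaussPDF 1 x) := by
            rw [hsq]
            exact ENNReal.div_le_div_right (lintegral_sq_le hmeasA) _
        _ = ∫⁻ s, ENNReal.ofReal (gaussPDF σ (x - s)) ^ 2
              / ENNReal.ofReal (gaussPDF 1 x) ∂A := by
            simp_rw [div_eq_mul_inv]
            rw [lintegral_mul_const' _ _ (by simp [hd])]
        _ = ∫⁻ s, ENNReal.ofReal (gaussPDF σ (x - s) ^ 2 / gaussPDF 1 x) ∂A := by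
            congr 1
            funext s
            rw [ENNReal.ofReal_div_of_pos hd, ENNReal.ofReal_pow (gaussPDF_nonneg hσ.le _)]
    have hprodmeas : AEMeasurable
        (Function.uncurry fun x s => ENNReal.ofReal (gaussPDF σ (x - s) ^ 2 / gaussPDF 1 x))
        ((volume : Measure ℝ).prod A) := by
      apply Measurable.aemeasurable
      apply Measurable.ennreal_ofReal
      apply Measurable.div
      · exact (hcont.measurable.pow_const 2)
      · exact ((gaussPDF_cont 1).comp continuous_fst).measurable
    calc (∫⁻ x, ENNReal.ofReal (p x ^ 2 / gaussPDF 1 x))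
        ≤ ∫⁻ x, ∫⁻ s, ENNReal.ofReal (gaussPDF σ (x - s) ^ 2 / gaussPDF 1 x) ∂A :=
          lintegral_mono step1
      _ = ∫⁻ s, (∫⁻ x, ENNReal.ofReal (gaussPDF σ (x - s) ^ 2 / gaussPDF 1 x)) ∂A :=
          lintegral_lintegral_swap hprodmeas
      _ ≤ ∫⁻ _, ENNReal.ofReal (Real.exp (R ^ 2) / σ) ∂A := by
          apply lintegral_mono_ae
          filter_upwards [hae] with s hs
          have hs2 : s ^ 2 ≤ R ^ 2 := sq_le_sq' hs.1 hs.2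
          have heq : (∫⁻ x, ENNReal.ofReal (gaussPDF σ (x - s) ^ 2 / gaussPDF 1 x))
              = ENNReal.ofReal (∫ x, gaussPDF σ (x - s) ^ 2 / gaussPDF 1 x) :=
            (ofReal_integral_eq_lintegral_ofReal (key_integrable σ s hσ hσ2)
              (Filter.Eventually.of_forall fun x =>
                div_nonneg (sq_nonneg _) (gaussPDF_pos one_pos x).le)).symm
          rw [heq]
          exact ENNReal.ofReal_le_ofReal (key_bound σ s R hσ hσ2 hs2)
      _ = ENNReal.ofReal (Real.exp (R ^ 2) / σ) := by
          rw [lintegral_const, measure_univ, mul_one]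
  by_cases hint : Integrable (fun x => p x ^ 2 / gaussPDF 1 x) (volume : Measure ℝ)
  · rw [integral_eq_lintegral_of_nonneg_ae (Filter.Eventually.of_forall hg_nonneg) hgm]
    exact ENNReal.toReal_le_of_le_ofReal hBpos Lbound
  · rw [integral_undef hint]
    exact hBpos
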